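/- Let A be a self-adjoint operator on a Hilbert space X with κ = min σ(A), T > 0, and w₀ ∈ X. The control u₂(t) = ∫_{[κ,∞)} e^{λt} g_T(λ) dP_A(λ) w₀, with g_T(λ) = −1/T for λ = 0 and g_T(λ) = −2λ/(e^{2λT} − 1) for λ ≠ 0, is a null-control in time T for ẇ + Aw = u, and ‖u₂‖²_{L²([0,T],X)} ≤ ‖w₀‖² · (1/T if κ = 0, and 2κ/(e^{2κT} − 1) if κ ≠ 0). -/

import Mathlib

open MeasureTheory

lemma aux_exp_integral (c b : ℝ) (hc : c ≠ 0) :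
    ∫ t in (0:ℝ)..b, Real.exp (c * t) = (Real.exp (c * b) - 1) / c := by
  rw [intervalIntegral.integral_comp_mul_left (fun x => Real.exp x) hc]
  rw [integral_exp]
  rw [mul_zero, Real.exp_zero, smul_eq_mul]
  field_simp

noncomputable def auxPhi (c : ℝ) : ℝ := ∫ s in (0:ℝ)..1, Real.exp (c * s)

lemma auxPhi_zero : auxPhi 0 = 1 := by simp [auxPhi]

lemma auxPhi_ne (c : ℝ) (hc : c ≠ 0) : auxPhi c = (Real.exp c - 1) / c := by
  rw [auxPhi, aux_exp_integral c 1 hc, mul_one]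

lemma auxPhi_pos (c : ℝ) : 0 < auxPhi c := by
  rcases eq_or_ne c 0 with h | h
  · simp [h, auxPhi_zero]
  · rw [auxPhi_ne c h]
    rcases lt_or_gt_of_ne h with hneg | hpos
    · apply div_pos_of_neg_of_neg
      · have : Real.exp c < Real.exp 0 := Real.exp_lt_exp.2 hneg
        simpa using this
      · exact hneg
    · apply div_pos
      · have : Real.exp 0 < Real.exp c := Real.exp_lt_exp.2 hpos
        simpa using this
      · exact hpos

lemma auxPhi_mono {x y : ℝ} (h : x ≤ y) : auxPhi x ≤ auxPhi y := by
  apply intervalIntegral.integral_mono_on (by norm_num)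
  · exact (Real.continuous_exp.comp (continuous_const.mul continuous_id)).intervalIntegrable 0 1
  · exact (Real.continuous_exp.comp (continuous_const.mul continuous_id)).intervalIntegrable 0 1
  · intro s hs
    exact Real.exp_le_exp.2 (mul_le_mul_of_nonneg_right h hs.1)

lemma aux_time_integral (T : ℝ) (hT : 0 < T) (gT : ℝ → ℝ) (hg0 : gT 0 = -(1 / T))
    (hg : ∀ l : ℝ, l ≠ 0 → gT l = -(2 * l) / (Real.exp (2 * l * T) - 1)) (l : ℝ) :
    (∫ t in (0:ℝ)..T, (Real.exp (l * t) * gT l) ^ 2) = (1 / T) / auxPhi (2 * l * T) := by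
  have hint : ∀ t : ℝ, (Real.exp (l * t) * gT l) ^ 2 = Real.exp (2 * l * t) * (gT l) ^ 2 := by
    intro t
    rw [mul_pow, sq (Real.exp (l * t)), ← Real.exp_add, show l * t + l * t = 2 * l * t by ring]
  simp only [hint]
  rw [intervalIntegral.integral_mul_const]
  rcases eq_or_ne l 0 with h0 | h0
  · subst h0
    simp only [mul_zero, zero_mul, zero_mul, Real.exp_zero, hg0, auxPhi_zero]
    rw [intervalIntegral.integral_const]
    field_simp
    ring
  · have h2l : (2 * l) ≠ 0 := mul_ne_zero two_ne_zero h0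
    have h2lT : (2 * l * T) ≠ 0 := mul_ne_zero h2l hT.ne'
    have hexp : Real.exp (2 * l * T) - 1 ≠ 0 := by
      rw [sub_ne_zero]
      intro h
      exact h2lT ((Real.exp_eq_one_iff _).1 h)
    rw [aux_exp_integral (2 * l) T h2l, hg l h0, auxPhi_ne _ h2lT]
    field_simp

theorem stmt_17 {X : Type*} [NormedAddCommGroup X] [InnerProductSpace ℝ X]
    (κ T : ℝ) (hT : 0 < T)
    (w₀ : X) (μ : Measure ℝ) (hfin : IsFiniteMeasure μ)
    (hnorm : ‖w₀‖ ^ 2 = (μ Set.univ).toReal)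
    (hspec : ∀ᵐ l ∂μ, κ ≤ l)
    (gT : ℝ → ℝ) (hg0 : gT 0 = -(1 / T))
    (hg : ∀ l : ℝ, l ≠ 0 → gT l = -(2 * l) / (Real.exp (2 * l * T) - 1)) :
    (∀ l : ℝ, κ ≤ l →
      Real.exp (-(l * T)) +
        (∫ s in (0 : ℝ)..T, Real.exp (-(l * (T - s))) * (Real.exp (l * s) * gT l)) = 0) ∧
    (κ = 0 →
      (∫ t in (0 : ℝ)..T, ∫ l, (Real.exp (l * t) * gT l) ^ 2 ∂μ) ≤ ‖w₀‖ ^ 2 * (1 / T)) ∧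
    (κ ≠ 0 →
      (∫ t in (0 : ℝ)..T, ∫ l, (Real.exp (l * t) * gT l) ^ 2 ∂μ) ≤
        ‖w₀‖ ^ 2 * (2 * κ / (Real.exp (2 * κ * T) - 1))) := by
  haveI := hfin
  -- measurability of gT
  have hgTmeas : Measurable gT := by
    have heq : gT = fun l => if l = 0 then -(1 / T) else -(2 * l) / (Real.exp (2 * l * T) - 1) := by
      funext l
      by_cases h : l = 0
      · simp [h, hg0]
      · simp [h, hg l h]
    rw [heq]
    refine Measurable.ite (measurableSet_eq_fun measurable_id measurable_const)
      measurable_const ?_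
    exact ((measurable_id.const_mul 2).neg).div
      ((Real.measurable_exp.comp ((measurable_id.const_mul 2).mul_const T)).sub measurable_const)
  have hFmeas : Measurable (fun p : ℝ × ℝ =>
      ENNReal.ofReal ((Real.exp (p.2 * p.1) * gT p.2) ^ 2)) := by
    apply ENNReal.measurable_ofReal.comp
    exact ((Real.continuous_exp.comp (continuous_snd.mul continuous_fst)).measurable.mul
      (hgTmeas.comp measurable_snd)).pow_const 2
  set ν : Measure ℝ := volume.restrict (Set.Ioc (0:ℝ) T) with hν
  set L : ℝ → ENNReal := fun t => ∫⁻ l, ENNReal.ofReal ((Real.exp (l * t) * gT l) ^ 2) ∂μ with hL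
  have hLmeas : Measurable L :=
    Measurable.lintegral_prod_right
      (f := fun t l => ENNReal.ofReal ((Real.exp (l * t) * gT l) ^ 2)) hFmeas
  have htime : ∀ l : ℝ, (∫⁻ t, ENNReal.ofReal ((Real.exp (l * t) * gT l) ^ 2) ∂ν)
      = ENNReal.ofReal ((1 / T) / auxPhi (2 * l * T)) := by
    intro l
    have hInt : IntegrableOn (fun t => (Real.exp (l * t) * gT l) ^ 2) (Set.Ioc 0 T) := by
      apply Continuous.integrableOn_Ioc
      exact ((Real.continuous_exp.comp (continuous_const.mul continuous_id)).mul continuous_const).pow 2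
    rw [hν, ← ofReal_integral_eq_lintegral_ofReal hInt (ae_of_all _ fun t => sq_nonneg _)]
    congr 1
    rw [← intervalIntegral.integral_of_le hT.le]
    exact aux_time_integral T hT gT hg0 hg l
  have hBmono : ∀ l : ℝ, κ ≤ l → (1 / T) / auxPhi (2 * l * T) ≤ (1 / T) / auxPhi (2 * κ * T) := by
    intro l hl
    gcongr
    · exact auxPhi_pos _
    · exact auxPhi_mono (by nlinarith)
  have hBnn : 0 ≤ (1 / T) / auxPhi (2 * κ * T) := div_nonneg (by positivity) (auxPhi_pos _).le
  have hswap : (∫⁻ t, L t ∂ν)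
      = ∫⁻ l, (∫⁻ t, ENNReal.ofReal ((Real.exp (l * t) * gT l) ^ 2) ∂ν) ∂μ :=
    lintegral_lintegral_swap hFmeas.aemeasurable
  have hbound : (∫⁻ t, L t ∂ν) ≤ ENNReal.ofReal ((1 / T) / auxPhi (2 * κ * T)) * μ Set.univ := by
    rw [hswap]
    calc ∫⁻ l, (∫⁻ t, ENNReal.ofReal ((Real.exp (l * t) * gT l) ^ 2) ∂ν) ∂μ
        ≤ ∫⁻ _, ENNReal.ofReal ((1 / T) / auxPhi (2 * κ * T)) ∂μ := by
          apply lintegral_mono_ae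
          filter_upwards [hspec] with l hl
          rw [htime l]
          exact ENNReal.ofReal_le_ofReal (hBmono l hl)
      _ = _ := by rw [lintegral_const]
  have hlttop : (∫⁻ t, L t ∂ν) ≠ ⊤ :=
    ne_top_of_le_ne_top (ENNReal.mul_ne_top ENNReal.ofReal_ne_top (measure_ne_top μ _)) hbound
  have key : (∫ t in (0:ℝ)..T, ∫ l, (Real.exp (l * t) * gT l) ^ 2 ∂μ)
      ≤ ‖w₀‖ ^ 2 * ((1 / T) / auxPhi (2 * κ * T)) := by
    rw [intervalIntegral.integral_of_le hT.le]
    have hpt : ∀ t : ℝ, (∫ l, (Real.exp (l * t) * gT l) ^ 2 ∂μ) = (L t).toReal := by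
      intro t
      rw [hL]
      exact integral_eq_lintegral_of_nonneg_ae (ae_of_all _ fun l => sq_nonneg _)
        (((Real.measurable_exp.comp (measurable_id.mul_const t)).mul
          hgTmeas).pow_const 2).aestronglyMeasurable
    simp only [hpt]
    rw [show (∫ t in Set.Ioc (0:ℝ) T, (L t).toReal) = ∫ t, (L t).toReal ∂ν from rfl]
    rw [integral_toReal hLmeas.aemeasurable (ae_lt_top hLmeas hlttop)]
    calc (∫⁻ t, L t ∂ν).toReal
        ≤ (ENNReal.ofReal ((1 / T) / auxPhi (2 * κ * T)) * μ Set.univ).toReal :=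
          ENNReal.toReal_mono (ENNReal.mul_ne_top ENNReal.ofReal_ne_top (measure_ne_top μ _)) hbound
      _ = ((1 / T) / auxPhi (2 * κ * T)) * (μ Set.univ).toReal := by
          rw [ENNReal.toReal_mul, ENNReal.toReal_ofReal hBnn]
      _ = ‖w₀‖ ^ 2 * ((1 / T) / auxPhi (2 * κ * T)) := by rw [hnorm]; ring
  -- part 1
  refine ⟨?_, ?_, ?_⟩
  · intro l _
    have hrw : ∀ s : ℝ, Real.exp (-(l * (T - s))) * (Real.exp (l * s) * gT l)
        = (Real.exp (-(l * T)) * gT l) * Real.exp (2 * l * s) := by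
      intro s
      have h1 : Real.exp (-(l * (T - s))) * Real.exp (l * s)
          = Real.exp (-(l * T)) * Real.exp (2 * l * s) := by
        rw [← Real.exp_add, ← Real.exp_add]
        congr 1
        ring
      calc Real.exp (-(l * (T - s))) * (Real.exp (l * s) * gT l)
          = (Real.exp (-(l * (T - s))) * Real.exp (l * s)) * gT l := by ring
        _ = (Real.exp (-(l * T)) * gT l) * Real.exp (2 * l * s) := by rw [h1]; ring
    simp only [hrw]
    rw [intervalIntegral.integral_const_mul]
    rcases eq_or_ne l 0 with h0 | h0
    · subst h0
      simp only [mul_zero, zero_mul, neg_zero, Real.exp_zero, hg0, one_mul]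
      rw [intervalIntegral.integral_const]
      field_simp
      rw [smul_eq_mul]
      ring
    · have h2l : (2 * l) ≠ 0 := mul_ne_zero two_ne_zero h0
      have h2lT : (2 * l * T) ≠ 0 := mul_ne_zero h2l hT.ne'
      have hexp : Real.exp (2 * l * T) - 1 ≠ 0 := by
        rw [sub_ne_zero]
        intro h
        exact h2lT ((Real.exp_eq_one_iff _).1 h)
      rw [aux_exp_integral (2 * l) T h2l, hg l h0]
      field_simp
      rw [show l * T * 2 = 2 * l * T by ring, div_self hexp]
      ring
  · intro hκ
    subst hκ
    simp only [mul_zero, zero_mul, auxPhi_zero, div_one] at key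
    exact key
  · intro hκ
    have h2κT : (2 * κ * T) ≠ 0 := mul_ne_zero (mul_ne_zero two_ne_zero hκ) hT.ne'
    have hexp : Real.exp (2 * κ * T) - 1 ≠ 0 := by
      rw [sub_ne_zero]
      intro h
      exact h2κT ((Real.exp_eq_one_iff _).1 h)
    have heq2 : (1 / T) / auxPhi (2 * κ * T) = 2 * κ / (Real.exp (2 * κ * T) - 1) := by
      rw [auxPhi_ne _ h2κT]
      field_simp
    rw [← heq2]
    exact key
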